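/- Let n ≥ 3, let A be the all-heads string HH…H of length n, and let B = b_1…b_n be any head/tail string of length n. Let s be the number of leading H bits of B (the largest s with b_1 = … = b_s = H) and let t be the number of trailing H bits of B (the largest t with b_{n−t+1} = … = b_n = H). Then C(A,B) = 2^s − 1 and C(B,A) = 2^t − 1; in particular C(A,A) = 2^n − 1. Moreover, if B is not constant (i.e., B is neither HH…H nor TT…T), then C(B,B) ≤ 2^n − 1 − 2^{n−2}. -/

import Mathlib

/-- The Conway number (correlation) `C(A,B)` of two head/tail strings of length `n`,
encoded as functions `Fin n → Bool` (with `H = true`, `T = false`, and 0-indexed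
positions): `C(A,B) = ∑_{i=1}^n δ_i 2^{n-i}` where `δ_i = 1` iff `a_{i+j} = b_{1+j}`
for all `j = 0,…,n-i`. -/
def conway {n : ℕ} (A B : Fin n → Bool) : ℕ :=
  ∑ i : Fin n,
    if (∀ j : Fin n, (i : ℕ) + (j : ℕ) < n → A (i + j) = B j) then 2 ^ (n - 1 - (i : ℕ)) else 0

/-- Let `A = HH…H` have length `n ≥ 3`, let `B` be any string of length `n`, let `s` be
the number of leading `H` bits of `B` and `t` the number of trailing `H` bits of `B`.
Then `C(A,B) = 2^s - 1`, `C(B,A) = 2^t - 1`, `C(A,A) = 2^n - 1`, and if `B` is not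
constant then `C(B,B) ≤ 2^n - 1 - 2^{n-2}`. -/
lemma geom_aux (s : ℕ) : ∑ i ∈ Finset.range s, 2 ^ i = 2 ^ s - 1 := by
  induction s with
  | zero => simp
  | succ k ih =>
    rw [Finset.sum_range_succ, ih]
    have : 0 < 2 ^ k := Nat.pow_pos (by norm_num)
    ring_nf
    omega

lemma sum_tail (n s : ℕ) (hs : s ≤ n) :
    ∑ i ∈ Finset.range n, (if n - s ≤ i then 2 ^ (n - 1 - i) else 0) = 2 ^ s - 1 := by
  rw [← Finset.sum_range_reflect]
  have h1 : ∀ i ∈ Finset.range n,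
      (if n - s ≤ n - 1 - i then 2 ^ (n - 1 - (n - 1 - i)) else 0)
        = (if i < s then 2 ^ i else 0) := by
    intro i hi
    simp only [Finset.mem_range] at hi
    have e1 : n - 1 - (n - 1 - i) = i := by omega
    have e2 : (n - s ≤ n - 1 - i) ↔ i < s := by omega
    rw [e1]
    simp [e2]
  rw [Finset.sum_congr rfl h1, ← Finset.sum_filter]
  have h2 : (Finset.range n).filter (· < s) = Finset.range s := by
    ext x
    simp only [Finset.mem_filter, Finset.mem_range]
    omega
  rw [h2, geom_aux]

lemma conway_eq_pow {n : ℕ} (A B : Fin n → Bool) (s : ℕ) (hs : s ≤ n)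
    (h : ∀ i : Fin n,
      (∀ j : Fin n, (i : ℕ) + (j : ℕ) < n → A (i + j) = B j) ↔ n - s ≤ (i : ℕ)) :
    conway A B = 2 ^ s - 1 := by
  unfold conway
  calc ∑ i : Fin n, (if (∀ j : Fin n, (i : ℕ) + (j : ℕ) < n → A (i + j) = B j)
          then 2 ^ (n - 1 - (i : ℕ)) else 0)
      = ∑ i : Fin n, (if n - s ≤ (i : ℕ) then 2 ^ (n - 1 - (i : ℕ)) else 0) :=
        Finset.sum_congr rfl fun i _ => if_congr (h i) rfl rfl
    _ = ∑ i ∈ Finset.range n, (if n - s ≤ i then 2 ^ (n - 1 - i) else 0) :=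
        Fin.sum_univ_eq_sum_range (fun i => if n - s ≤ i then 2 ^ (n - 1 - i) else 0) n
    _ = 2 ^ s - 1 := sum_tail n s hs

theorem conway_allHeads_values (n : ℕ) (hn : 3 ≤ n) (A B : Fin n → Bool)
    (hA : A = fun _ => true) (s t : ℕ) (hs : s ≤ n) (ht : t ≤ n)
    (hsl : ∀ i : Fin n, (i : ℕ) < s → B i = true)
    (hsm : ∀ h : s < n, B ⟨s, h⟩ = false)
    (htl : ∀ i : Fin n, n - t ≤ (i : ℕ) → B i = true)
    (htm : ∀ _ : t < n, B ⟨n - t - 1, by omega⟩ = false) :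
    conway A B = 2 ^ s - 1 ∧ conway B A = 2 ^ t - 1 ∧ conway A A = 2 ^ n - 1 ∧
      ((B ≠ fun _ => true) ∧ (B ≠ fun _ => false) →
        conway B B ≤ 2 ^ n - 1 - 2 ^ (n - 2)) := by
  subst hA
  refine ⟨?_, ?_, ?_, ?_⟩
  · -- conway A B = 2^s - 1
    apply conway_eq_pow _ _ s hs
    intro i
    constructor
    · intro hc
      by_contra hi
      push_neg at hi
      have hsn : s < n := by omega
      have hj : (i : ℕ) + s < n := by omega
      have := hc ⟨s, hsn⟩ hj
      rw [hsm hsn] at this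
      simp at this
    · intro hi j hj
      have : (j : ℕ) < s := by omega
      exact (hsl j this).symm
  · -- conway B A = 2^t - 1
    apply conway_eq_pow _ _ t ht
    intro i
    constructor
    · intro hc
      by_contra hi
      push_neg at hi
      have htn : t < n := by omega
      set j : Fin n := ⟨n - t - 1 - (i : ℕ), by omega⟩ with hjdef
      have hj : (i : ℕ) + (j : ℕ) < n := by simp [hjdef]; omega
      have hv : i + j = (⟨n - t - 1, by omega⟩ : Fin n) := by
        apply Fin.ext
        rw [Fin.val_add, Nat.mod_eq_of_lt hj]
        simp [hjdef]
        omega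
      have := hc j hj
      rw [hv, htm htn] at this
      simp at this
    · intro hi j hj
      have hv : ((i + j : Fin n) : ℕ) = (i : ℕ) + (j : ℕ) := by
        rw [Fin.val_add, Nat.mod_eq_of_lt hj]
      have : n - t ≤ ((i + j : Fin n) : ℕ) := by omega
      rw [htl _ this]
  · -- conway A A = 2^n - 1
    apply conway_eq_pow _ _ n le_rfl
    intro i
    constructor
    · intro _; omega
    · intro _ j _; rfl
  · -- nonconstant bound
    rintro ⟨hBt, hBf⟩
    set i1 : Fin n := ⟨1, by omega⟩ with hi1
    have hnc : ¬ (∀ j : Fin n, (i1 : ℕ) + (j : ℕ) < n → B (i1 + j) = B j) := by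
      intro hc
      have hconst : ∀ k : ℕ, (hk : k < n) → B ⟨k, hk⟩ = B ⟨0, by omega⟩ := by
        intro k
        induction k with
        | zero => intro _; rfl
        | succ m ih =>
          intro hk
          have hm : m < n := by omega
          have hj : (i1 : ℕ) + ((⟨m, hm⟩ : Fin n) : ℕ) < n := by simp [hi1]; omega
          have hv : i1 + ⟨m, hm⟩ = (⟨m + 1, hk⟩ : Fin n) := by
            apply Fin.ext
            rw [Fin.val_add, Nat.mod_eq_of_lt hj]
            simp [hi1]; omega
          have := hc ⟨m, hm⟩ hj
          rw [hv] at this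
          rw [this, ih hm]
      cases hB0 : B ⟨0, by omega⟩ with
      | true =>
        apply hBt
        funext k
        have := hconst k.val k.isLt
        rw [hB0] at this
        simpa using this
      | false =>
        apply hBf
        funext k
        have := hconst k.val k.isLt
        rw [hB0] at this
        simpa using this
    have hle : conway B B ≤ ∑ i : Fin n, (if (i : ℕ) = 1 then 0 else 2 ^ (n - 1 - (i : ℕ))) := by
      unfold conway
      apply Finset.sum_le_sum
      intro i _
      by_cases h1 : (i : ℕ) = 1
      · have : i = i1 := Fin.ext (by simp [hi1, h1])
        subst this
        rw [if_pos h1, if_neg hnc]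
      · rw [if_neg h1]
        split <;> simp
    have hsum : (∑ i : Fin n, (if (i : ℕ) = 1 then 0 else 2 ^ (n - 1 - (i : ℕ))))
        + 2 ^ (n - 2) = 2 ^ n - 1 := by
      have hterm : ∀ i : Fin n,
          (if (i : ℕ) = 1 then 0 else 2 ^ (n - 1 - (i : ℕ)))
            + (if i = i1 then 2 ^ (n - 2) else 0) = 2 ^ (n - 1 - (i : ℕ)) := by
        intro i
        rcases eq_or_ne i i1 with hi | hi
        · subst hi
          rw [if_pos (show ((i1 : Fin n) : ℕ) = 1 from rfl), if_pos rfl, zero_add]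
          congr 1
        · rw [if_neg (fun h => hi (Fin.ext h)), if_neg hi, add_zero]
      have hfull : (∑ i : Fin n, 2 ^ (n - 1 - (i : ℕ))) = 2 ^ n - 1 := by
        rw [Fin.sum_univ_eq_sum_range (fun i => 2 ^ (n - 1 - i)) n]
        have := sum_tail n n le_rfl
        simp only [Nat.sub_self, Nat.zero_le, if_true] at this
        exact this
      have hsingle : (∑ i : Fin n, (if i = i1 then 2 ^ (n - 2) else 0)) = 2 ^ (n - 2) := by
        rw [Finset.sum_ite_eq' Finset.univ i1 (fun _ => 2 ^ (n - 2))]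
        simp
      calc (∑ i : Fin n, (if (i : ℕ) = 1 then 0 else 2 ^ (n - 1 - (i : ℕ)))) + 2 ^ (n - 2)
          = ∑ i : Fin n, ((if (i : ℕ) = 1 then 0 else 2 ^ (n - 1 - (i : ℕ)))
              + (if i = i1 then 2 ^ (n - 2) else 0)) := by
            rw [Finset.sum_add_distrib, hsingle]
        _ = ∑ i : Fin n, 2 ^ (n - 1 - (i : ℕ)) := Finset.sum_congr rfl fun i _ => hterm i
        _ = 2 ^ n - 1 := hfull
    exact hle.trans (Nat.le_sub_of_add_le (le_of_eq hsum))
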